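/- arXiv:2201.07371 — 3 statements merged into one kernel-verified Lean document; each statement's English description precedes it below -/
import Mathlib

section
/- Let ρ : ℝ → ℝ be twice continuously differentiable and let w, p : ℝ → ℝ be differentiable functions. Set u(t) = w(t) − p(t) and define F(t) = ∫_0^{u(t)} ρ′(p(t) + ξ)·ξ dξ. Then F is differentiable and for every t one has the identity (d/dt)[ρ(w(t)) − ρ(p(t))] · u(t) = F′(t) + p′(t) · ∫_0^{u(t)} ρ″(p(t) + ξ)·(u(t) − ξ) dξ. -/
/-- Wheeler-type differentiation identity: with `u = w − p` and
`F(t) = ∫_0^{u(t)} ρ′(p(t) + ξ)·ξ dξ`, the function `F` is differentiable and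
`(d/dt)[ρ(w) − ρ(p)]·u = F′ + p′·∫_0^{u} ρ″(p + ξ)·(u − ξ) dξ`. -/
theorem wheeler_differentiation_identity
    (ρ : ℝ → ℝ) (hρ : ContDiff ℝ 2 ρ)
    (w p : ℝ → ℝ) (hw : Differentiable ℝ w) (hp : Differentiable ℝ p)
    (u F : ℝ → ℝ)
    (hu : ∀ t, u t = w t - p t)
    (hF : ∀ t, F t = ∫ ξ in (0:ℝ)..(u t), deriv ρ (p t + ξ) * ξ) :
    Differentiable ℝ F ∧
      ∀ t, deriv (fun s => ρ (w s) - ρ (p s)) t * u t =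
        deriv F t +
          deriv p t * ∫ ξ in (0:ℝ)..(u t), deriv (deriv ρ) (p t + ξ) * (u t - ξ) := by
  have hρd : Differentiable ℝ ρ := hρ.differentiable (by norm_num)
  have h2 : ContDiff ℝ 1 (deriv ρ) := by
    have h : ContDiff ℝ ((1:ℕ∞)+1) ρ := hρ.of_le (by norm_num)
    exact (contDiff_succ_iff_deriv.mp h).2.2
  have hρ'd : Differentiable ℝ (deriv ρ) := h2.differentiable (by norm_num)
  have hρ'c : Continuous (deriv ρ) := hρ'd.continuous
  have hρ''c : Continuous (deriv (deriv ρ)) := h2.continuous_deriv le_rfl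
  set R : ℝ → ℝ := fun x => ∫ s in (0:ℝ)..x, ρ s with hRdef
  have hR : ∀ x, HasDerivAt R (ρ x) x := fun x =>
    intervalIntegral.integral_hasDerivAt_right
      (hρd.continuous.intervalIntegrable _ _)
      (hρd.continuous.stronglyMeasurableAtFilter _ _)
      hρd.continuous.continuousAt
  have hcomp : ∀ a x : ℝ, HasDerivAt (fun y => ρ (a + y)) (deriv ρ (a + x)) x := by
    intro a x
    have h1 : HasDerivAt (fun y : ℝ => a + y) 1 x := by
      simpa using (hasDerivAt_id x).const_add a
    simpa [Function.comp_def] using ((hρd (a + x)).hasDerivAt.comp x h1)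
  have hcomp' : ∀ a x : ℝ, HasDerivAt (fun y => deriv ρ (a + y)) (deriv (deriv ρ) (a + x)) x := by
    intro a x
    have h1 : HasDerivAt (fun y : ℝ => a + y) 1 x := by
      simpa using (hasDerivAt_id x).const_add a
    simpa [Function.comp_def] using ((hρ'd (a + x)).hasDerivAt.comp x h1)
  have hw' : ∀ t, p t + u t = w t := by intro t; rw [hu]; ring
  have hA : ∀ t, F t = u t * ρ (w t) - (R (w t) - R (p t)) := by
    intro t
    have h1 : (∫ ξ in (0:ℝ)..(u t), deriv ρ (p t + ξ) * ξ)
        = ∫ ξ in (0:ℝ)..(u t), ξ * deriv ρ (p t + ξ) :=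
      intervalIntegral.integral_congr fun x _ => mul_comm _ _
    have hibp := intervalIntegral.integral_mul_deriv_eq_deriv_mul
      (u := fun x : ℝ => x) (u' := fun _ : ℝ => (1:ℝ))
      (v := fun x => ρ (p t + x)) (v' := fun x => deriv ρ (p t + x))
      (a := (0:ℝ)) (b := u t)
      (fun x _ => hasDerivAt_id x)
      (fun x _ => hcomp (p t) x)
      (continuous_const.intervalIntegrable _ _)
      ((hρ'c.comp (continuous_const.add continuous_id)).intervalIntegrable _ _)
    have hshift : (∫ x in (0:ℝ)..(u t), ρ (p t + x)) = ∫ x in (p t)..(w t), ρ x := by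
      rw [intervalIntegral.integral_comp_add_left (fun x => ρ x) (p t), add_zero, hw']
    have hsub : (∫ x in (p t)..(w t), ρ x) = R (w t) - R (p t) :=
      (intervalIntegral.integral_interval_sub_left
        (hρd.continuous.intervalIntegrable _ _)
        (hρd.continuous.intervalIntegrable _ _)).symm
    rw [hF t, h1, hibp]
    simp only [one_mul, zero_mul, hshift, hsub, add_zero, hw']
    ring
  have hftc : ∀ t, (∫ ξ in (0:ℝ)..(u t), deriv ρ (p t + ξ)) = ρ (w t) - ρ (p t) := by
    intro t
    rw [intervalIntegral.integral_comp_add_left (fun x => deriv ρ x) (p t), add_zero, hw']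
    exact intervalIntegral.integral_deriv_eq_sub (fun x _ => hρd x)
      (hρ'c.intervalIntegrable _ _)
  have hB : ∀ t, (∫ ξ in (0:ℝ)..(u t), deriv (deriv ρ) (p t + ξ) * (u t - ξ))
      = ρ (w t) - ρ (p t) - deriv ρ (p t) * u t := by
    intro t
    have h1 : (∫ ξ in (0:ℝ)..(u t), deriv (deriv ρ) (p t + ξ) * (u t - ξ))
        = ∫ ξ in (0:ℝ)..(u t), (u t - ξ) * deriv (deriv ρ) (p t + ξ) :=
      intervalIntegral.integral_congr fun x _ => mul_comm _ _
    have hibp := intervalIntegral.integral_mul_deriv_eq_deriv_mul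
      (u := fun x : ℝ => u t - x) (u' := fun _ : ℝ => (-1:ℝ))
      (v := fun x => deriv ρ (p t + x)) (v' := fun x => deriv (deriv ρ) (p t + x))
      (a := (0:ℝ)) (b := u t)
      (fun x _ => by simpa using (hasDerivAt_id x).const_sub (u t))
      (fun x _ => hcomp' (p t) x)
      (continuous_const.intervalIntegrable _ _)
      ((hρ''c.comp (continuous_const.add continuous_id)).intervalIntegrable _ _)
    rw [h1, hibp]
    have hI : (∫ x in (0:ℝ)..(u t), (-1:ℝ) * deriv ρ (p t + x))
        = -(ρ (w t) - ρ (p t)) := by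
      rw [show (fun x => (-1:ℝ) * deriv ρ (p t + x)) = fun x => -(deriv ρ (p t + x)) by
        funext x; ring]
      rw [intervalIntegral.integral_neg, hftc t]
    rw [hI]
    simp only [sub_self, zero_mul, sub_zero, add_zero, hw']
    ring
  set G : ℝ → ℝ := fun s => u s * ρ (w s) - (R (w s) - R (p s)) with hGdef
  have hFG : F = G := funext hA
  have hueq : u = fun s => w s - p s := funext hu
  have hud : ∀ t, HasDerivAt u (deriv w t - deriv p t) t := by
    intro t; rw [hueq]; exact (hw t).hasDerivAt.sub (hp t).hasDerivAt
  have hGd : ∀ t, HasDerivAt G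
      ((deriv w t - deriv p t) * ρ (w t) + u t * (deriv ρ (w t) * deriv w t)
        - (ρ (w t) * deriv w t - ρ (p t) * deriv p t)) t := by
    intro t
    have h1 : HasDerivAt (fun s => ρ (w s)) (deriv ρ (w t) * deriv w t) t :=
      (hρd (w t)).hasDerivAt.comp t (hw t).hasDerivAt
    have h2 : HasDerivAt (fun s => R (w s)) (ρ (w t) * deriv w t) t :=
      (hR (w t)).comp t (hw t).hasDerivAt
    have h3 : HasDerivAt (fun s => R (p s)) (ρ (p t) * deriv p t) t :=
      (hR (p t)).comp t (hp t).hasDerivAt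
    exact ((hud t).mul h1).sub (h2.sub h3)
  constructor
  · rw [hFG]; exact fun t => (hGd t).differentiableAt
  · intro t
    have hL : deriv (fun s => ρ (w s) - ρ (p s)) t
        = deriv ρ (w t) * deriv w t - deriv ρ (p t) * deriv p t := by
      have h1 : HasDerivAt (fun s => ρ (w s)) (deriv ρ (w t) * deriv w t) t :=
        (hρd (w t)).hasDerivAt.comp t (hw t).hasDerivAt
      have h2 : HasDerivAt (fun s => ρ (p s)) (deriv ρ (p t) * deriv p t) t :=
        (hρd (p t)).hasDerivAt.comp t (hp t).hasDerivAt
      exact (h1.sub h2).deriv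
    have hFd : deriv F t
        = (deriv w t - deriv p t) * ρ (w t) + u t * (deriv ρ (w t) * deriv w t)
          - (ρ (w t) * deriv w t - ρ (p t) * deriv p t) := by
      rw [hFG]; exact (hGd t).deriv
    rw [hL, hFd, hB t]
    ring
end

section
/- Let (X, μ) be a measure space, let ρ(p) = ρ_ref · exp(c·(p − p_ref)) with constants ρ_ref > 0, c > 0, p_ref ∈ ℝ, and let φ > 0 be a constant. Let m ≤ M be real numbers and let f, g : X → ℝ be measurable functions with m ≤ f ≤ M and m ≤ g ≤ M μ-almost everywhere, and with f − g ∈ L²(μ). Then ∫_X φ·(ρ(f(x)) − ρ(g(x)))·(f(x) − g(x)) dμ(x) ≥ φ·c·ρ_ref·exp(c·(m − p_ref))·∫_X (f(x) − g(x))² dμ(x). -/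
open MeasureTheory

lemma exp_key (x y : ℝ) :
    Real.exp (min x y) * (x - y) ^ 2 ≤ (Real.exp x - Real.exp y) * (x - y) ∧
    (Real.exp x - Real.exp y) * (x - y) ≤ Real.exp (max x y) * (x - y) ^ 2 := by
  have main : ∀ u v : ℝ, v ≤ u →
      Real.exp v * (u - v) ^ 2 ≤ (Real.exp u - Real.exp v) * (u - v) ∧
      (Real.exp u - Real.exp v) * (u - v) ≤ Real.exp u * (u - v) ^ 2 := by
    intro u v h
    have d : 0 ≤ u - v := sub_nonneg.mpr h
    have e1 := Real.add_one_le_exp (u - v)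
    have e2 := Real.add_one_le_exp (v - u)
    have hx : Real.exp u = Real.exp v * Real.exp (u - v) := by
      rw [← Real.exp_add]; ring_nf
    have hy : Real.exp v = Real.exp u * Real.exp (v - u) := by
      rw [← Real.exp_add]; ring_nf
    have l1 : Real.exp v * (u - v) ≤ Real.exp u - Real.exp v := by
      nlinarith [mul_le_mul_of_nonneg_left e1 (Real.exp_pos v).le]
    have u1 : Real.exp u - Real.exp v ≤ Real.exp u * (u - v) := by
      nlinarith [mul_le_mul_of_nonneg_left e2 (Real.exp_pos u).le]
    exact ⟨by nlinarith [mul_le_mul_of_nonneg_right l1 d],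
      by nlinarith [mul_le_mul_of_nonneg_right u1 d]⟩
  rcases le_total y x with h | h
  · rw [min_eq_right h, max_eq_left h]
    exact main x y h
  · rw [min_eq_left h, max_eq_right h]
    obtain ⟨a1, a2⟩ := main y x h
    constructor <;> nlinarith
set_option maxHeartbeats 1000000 in
/-- L² coercivity estimate
`∫ φ·(ρ(f) − ρ(g))·(f − g) dμ ≥ φ·c·ρ_ref·exp(c·(m − p_ref))·∫ (f − g)² dμ`. -/
theorem rho_L2_coercivity
    {X : Type*} [MeasurableSpace X] (μ : Measure X)
    (ρref c pref : ℝ) (hρref : 0 < ρref) (hc : 0 < c)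
    (ρ : ℝ → ℝ) (hρ : ∀ p, ρ p = ρref * Real.exp (c * (p - pref)))
    (φ : ℝ) (hφ : 0 < φ)
    (m M : ℝ) (hmM : m ≤ M)
    (f g : X → ℝ) (hf : Measurable f) (hg : Measurable g)
    (hfbd : ∀ᵐ x ∂μ, f x ∈ Set.Icc m M) (hgbd : ∀ᵐ x ∂μ, g x ∈ Set.Icc m M)
    (hfg : MemLp (f - g) 2 μ) :
    (∫ x, φ * (ρ (f x) - ρ (g x)) * (f x - g x) ∂μ) ≥
      φ * c * ρref * Real.exp (c * (m - pref)) * ∫ x, (f x - g x) ^ 2 ∂μ := by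
  have hsq : Integrable (fun x => (f x - g x) ^ 2) μ := by
    simpa [Pi.sub_apply] using hfg.integrable_sq
  set K : ℝ := φ * c * ρref * Real.exp (c * (m - pref)) with hKdef
  set K1 : ℝ := φ * c * ρref * Real.exp (c * (M - pref)) with hK1def
  have hKpos : 0 < K := by positivity
  have hK1pos : 0 < K1 := by positivity
  have hρ' : ρ = fun p => ρref * Real.exp (c * (p - pref)) := funext hρ
  have hmeas : Measurable (fun x => φ * (ρ (f x) - ρ (g x)) * (f x - g x)) := by
    rw [hρ']; fun_prop
  have hpt : ∀ᵐ x ∂μ, K * (f x - g x) ^ 2 ≤ φ * (ρ (f x) - ρ (g x)) * (f x - g x) ∧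
      φ * (ρ (f x) - ρ (g x)) * (f x - g x) ≤ K1 * (f x - g x) ^ 2 := by
    filter_upwards [hfbd, hgbd] with x hfx hgx
    obtain ⟨hfm, hfM⟩ := hfx
    obtain ⟨hgm, hgM⟩ := hgx
    set a : ℝ := c * (f x - pref) with ha
    set b : ℝ := c * (g x - pref) with hb
    obtain ⟨key1, key2⟩ := exp_key a b
    have hab : a - b = c * (f x - g x) := by rw [ha, hb]; ring
    have hmin : Real.exp (c * (m - pref)) ≤ Real.exp (min a b) := by
      apply Real.exp_le_exp.mpr
      rcases le_total a b with h | h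
      · rw [min_eq_left h, ha]; nlinarith
      · rw [min_eq_right h, hb]; nlinarith
    have hmax : Real.exp (max a b) ≤ Real.exp (c * (M - pref)) := by
      apply Real.exp_le_exp.mpr
      rcases le_total a b with h | h
      · rw [max_eq_right h, hb]; nlinarith
      · rw [max_eq_left h, ha]; nlinarith
    rw [hρ (f x), hρ (g x), hKdef, hK1def]
    have hsq0 : (0:ℝ) ≤ (f x - g x) ^ 2 := sq_nonneg _
    have hemin : 0 < Real.exp (min a b) := Real.exp_pos _
    have hemax : 0 < Real.exp (max a b) := Real.exp_pos _
    constructor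
    · have h1 : Real.exp (c * (m - pref)) * (a - b) ^ 2 ≤ (Real.exp a - Real.exp b) * (a - b) := by
        nlinarith
      rw [hab] at h1
      have h2 := mul_le_mul_of_nonneg_left h1 (le_of_lt (by positivity : (0:ℝ) < φ * ρref / c))
      have hc' : c ≠ 0 := ne_of_gt hc
      calc φ * c * ρref * Real.exp (c * (m - pref)) * (f x - g x) ^ 2
          = φ * ρref / c * (Real.exp (c * (m - pref)) * (c * (f x - g x)) ^ 2) := by
            field_simp
        _ ≤ φ * ρref / c * ((Real.exp a - Real.exp b) * (c * (f x - g x))) := h2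
        _ = φ * (ρref * Real.exp a - ρref * Real.exp b) * (f x - g x) := by
            field_simp
    · have h1 : (Real.exp a - Real.exp b) * (a - b) ≤ Real.exp (c * (M - pref)) * (a - b) ^ 2 := by
        nlinarith
      rw [hab] at h1
      have h2 := mul_le_mul_of_nonneg_left h1 (le_of_lt (by positivity : (0:ℝ) < φ * ρref / c))
      have hc' : c ≠ 0 := ne_of_gt hc
      calc φ * (ρref * Real.exp a - ρref * Real.exp b) * (f x - g x)
          = φ * ρref / c * ((Real.exp a - Real.exp b) * (c * (f x - g x))) := by
            field_simp
        _ ≤ φ * ρref / c * (Real.exp (c * (M - pref)) * (c * (f x - g x)) ^ 2) := h2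
        _ = φ * c * ρref * Real.exp (c * (M - pref)) * (f x - g x) ^ 2 := by
            field_simp
  have hint : Integrable (fun x => φ * (ρ (f x) - ρ (g x)) * (f x - g x)) μ := by
    apply Integrable.mono' (hsq.const_mul K1) hmeas.aestronglyMeasurable
    filter_upwards [hpt] with x hx
    obtain ⟨h1, h2⟩ := hx
    rw [Real.norm_eq_abs, abs_le]
    constructor
    · nlinarith [sq_nonneg (f x - g x)]
    · exact h2
  rw [ge_iff_le, ← integral_const_mul]
  exact integral_mono_ae (hsq.const_mul K) hint (hpt.mono fun x hx => hx.1)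
end

section
/- Let (X, μ) be a measure space, let ρ(p) = ρ_ref · exp(c·(p − p_ref)) with constants ρ_ref > 0, c > 0, p_ref ∈ ℝ, let φ > 0 be a constant, and let m ≤ M be real numbers. Set δ = c·ρ_ref·exp(c·(m − p_ref)) and L = c·ρ_ref·exp(c·(M − p_ref)). Then for all measurable functions f, g, f′, g′ : X → ℝ taking values in [m, M] μ-almost everywhere, with f − g ∈ L²(μ) and f′ − g′ ∈ L²(μ), one has ∫_X φ·(ρ(f) − ρ(g))·(f − g) dμ − ∫_X φ·(ρ(f′) − ρ(g′))·(f − g) dμ ≥ (φ·δ/2)·‖f − g‖²_{L²(μ)} − (φ·L²/(2δ))·‖f′ − g′‖²_{L²(μ)}. -/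
open MeasureTheory

private lemma exp_lb (a b : ℝ) : Real.exp a * (b - a) ≤ Real.exp b - Real.exp a := by
  have h1 : Real.exp b = Real.exp a * Real.exp (b - a) := by
    rw [← Real.exp_add]; ring_nf
  nlinarith [Real.add_one_le_exp (b - a), Real.exp_pos a]

private lemma mono_lip (ρref c pref m M : ℝ) (hρref : 0 < ρref) (hc : 0 < c)
    {p q : ℝ} (hp : p ∈ Set.Icc m M) (hq : q ∈ Set.Icc m M) :
    c * ρref * Real.exp (c * (m - pref)) * (p - q) ^ 2 ≤
      (ρref * Real.exp (c * (p - pref)) - ρref * Real.exp (c * (q - pref))) * (p - q) ∧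
    |ρref * Real.exp (c * (p - pref)) - ρref * Real.exp (c * (q - pref))| ≤
      c * ρref * Real.exp (c * (M - pref)) * |p - q| := by
  obtain ⟨hpm, hpM⟩ := hp
  obtain ⟨hqm, hqM⟩ := hq
  set a := c * (q - pref) with ha
  set b := c * (p - pref) with hb
  have hlb : Real.exp a * (c * (p - q)) ≤ Real.exp b - Real.exp a := by
    have := exp_lb a b
    have hba : b - a = c * (p - q) := by rw [ha, hb]; ring
    linarith [this.trans_eq rfl, (by rw [hba] at this; exact this : _)]
  have hub : Real.exp b * (c * (q - p)) ≤ Real.exp a - Real.exp b := by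
    have := exp_lb b a
    have hab : a - b = c * (q - p) := by rw [ha, hb]; ring
    rw [hab] at this; exact this
  have hma : Real.exp (c * (m - pref)) ≤ Real.exp a :=
    Real.exp_le_exp.2 (by rw [ha]; nlinarith)
  have hmb : Real.exp (c * (m - pref)) ≤ Real.exp b :=
    Real.exp_le_exp.2 (by rw [hb]; nlinarith)
  have haM : Real.exp a ≤ Real.exp (c * (M - pref)) :=
    Real.exp_le_exp.2 (by rw [ha]; nlinarith)
  have hbM : Real.exp b ≤ Real.exp (c * (M - pref)) :=
    Real.exp_le_exp.2 (by rw [hb]; nlinarith)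
  have hea := Real.exp_pos a
  have heb := Real.exp_pos b
  rcases le_total q p with hqp | hqp
  · have h1 : 0 ≤ p - q := by linarith
    have hab : Real.exp a ≤ Real.exp b := Real.exp_le_exp.2 (by rw [ha, hb]; nlinarith)
    constructor
    · nlinarith [mul_le_mul_of_nonneg_right hlb h1,
        mul_le_mul_of_nonneg_right hma (mul_nonneg (mul_nonneg hc.le h1) h1)]
    · rw [abs_of_nonneg (by nlinarith : (0:ℝ) ≤ ρref * Real.exp b - ρref * Real.exp a),
        abs_of_nonneg h1]
      nlinarith [mul_le_mul_of_nonneg_right hbM (mul_nonneg hc.le h1)]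
  · have h1 : 0 ≤ q - p := by linarith
    have hab : Real.exp b ≤ Real.exp a := Real.exp_le_exp.2 (by rw [ha, hb]; nlinarith)
    constructor
    · nlinarith [mul_le_mul_of_nonneg_right hub h1,
        mul_le_mul_of_nonneg_right hmb (mul_nonneg (mul_nonneg hc.le h1) h1)]
    · rw [abs_of_nonpos (by nlinarith : ρref * Real.exp b - ρref * Real.exp a ≤ 0),
        abs_of_nonpos (by linarith : p - q ≤ 0)]
      nlinarith [mul_le_mul_of_nonneg_right haM (mul_nonneg hc.le h1)]

private lemma ptwise (ρref c pref m M φ δ L : ℝ) (hρref : 0 < ρref) (hc : 0 < c)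
    (hφ : 0 < φ)
    (hδ : δ = c * ρref * Real.exp (c * (m - pref)))
    (hL : L = c * ρref * Real.exp (c * (M - pref)))
    {p q p' q' : ℝ} (hp : p ∈ Set.Icc m M) (hq : q ∈ Set.Icc m M)
    (hp' : p' ∈ Set.Icc m M) (hq' : q' ∈ Set.Icc m M) :
    φ * δ / 2 * (p - q) ^ 2 - φ * L ^ 2 / (2 * δ) * (p' - q') ^ 2 ≤
      φ * (ρref * Real.exp (c * (p - pref)) - ρref * Real.exp (c * (q - pref))) * (p - q) -
      φ * (ρref * Real.exp (c * (p' - pref)) - ρref * Real.exp (c * (q' - pref))) * (p - q) := by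
  have hδpos : 0 < δ := by rw [hδ]; positivity
  have hLpos : 0 < L := by rw [hL]; positivity
  obtain ⟨h1, _⟩ := mono_lip ρref c pref m M hρref hc hp hq
  obtain ⟨_, h2⟩ := mono_lip ρref c pref m M hρref hc hp' hq'
  rw [← hδ] at h1
  rw [← hL] at h2
  have h3 : (ρref * Real.exp (c * (p' - pref)) - ρref * Real.exp (c * (q' - pref))) * (p - q)
      ≤ (L * |p' - q'|) * |p - q| := by
    calc _ ≤ |(ρref * Real.exp (c * (p' - pref)) - ρref * Real.exp (c * (q' - pref))) * (p - q)| :=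
          le_abs_self _
    _ = |ρref * Real.exp (c * (p' - pref)) - ρref * Real.exp (c * (q' - pref))| * |p - q| :=
          abs_mul _ _
    _ ≤ (L * |p' - q'|) * |p - q| :=
          mul_le_mul_of_nonneg_right h2 (abs_nonneg _)
  have hy : (L * |p' - q'|) * |p - q| ≤ δ / 2 * (p - q) ^ 2 + L ^ 2 / (2 * δ) * (p' - q') ^ 2 := by
    have hs : (0:ℝ) ≤ (δ * |p - q| - L * |p' - q'|) ^ 2 := sq_nonneg _
    have e1 : |p - q| ^ 2 = (p - q) ^ 2 := sq_abs _
    have e2 : |p' - q'| ^ 2 = (p' - q') ^ 2 := sq_abs _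
    rw [div_mul_eq_mul_div, div_mul_eq_mul_div, ← e1, ← e2]
    rw [div_add_div _ _ (two_ne_zero) (by positivity : (2:ℝ) * δ ≠ 0), le_div_iff₀ (by positivity)]
    nlinarith [hs, hδpos]
  have A1 := mul_le_mul_of_nonneg_left h1 hφ.le
  have A2 := mul_le_mul_of_nonneg_left (h3.trans hy) hφ.le
  have e3 : φ * (δ / 2 * (p - q) ^ 2 + L ^ 2 / (2 * δ) * (p' - q') ^ 2)
      = φ * δ / 2 * (p - q) ^ 2 + φ * L ^ 2 / (2 * δ) * (p' - q') ^ 2 := by ring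
  rw [e3] at A2
  have e4 : φ * (δ * (p - q) ^ 2) = 2 * (φ * δ / 2 * (p - q) ^ 2) := by ring
  rw [e4] at A1
  have e5 : φ * ((ρref * Real.exp (c * (p - pref)) - ρref * Real.exp (c * (q - pref))) * (p - q))
      = φ * (ρref * Real.exp (c * (p - pref)) - ρref * Real.exp (c * (q - pref))) * (p - q) := by ring
  rw [e5] at A1
  have e6 : φ * ((ρref * Real.exp (c * (p' - pref)) - ρref * Real.exp (c * (q' - pref))) * (p - q))
      = φ * (ρref * Real.exp (c * (p' - pref)) - ρref * Real.exp (c * (q' - pref))) * (p - q) := by ring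
  rw [e6] at A2
  have hs2 : 0 ≤ φ * δ / 2 * (p - q) ^ 2 := by positivity
  linarith


/-- Two-term lower bound combining strong monotonicity, the Lipschitz bound
and Young's inequality, used to telescope in time in the a posteriori error
estimate. Here `δ = c·ρ_ref·exp(c·(m − p_ref))` and `L = c·ρ_ref·exp(c·(M − p_ref))`. -/
theorem rho_telescoping_lower_bound
    {X : Type*} [MeasurableSpace X] (μ : Measure X)
    (ρref c pref : ℝ) (hρref : 0 < ρref) (hc : 0 < c)
    (ρ : ℝ → ℝ) (hρ : ∀ p, ρ p = ρref * Real.exp (c * (p - pref)))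
    (φ : ℝ) (hφ : 0 < φ)
    (m M : ℝ) (hmM : m ≤ M)
    (δ L : ℝ)
    (hδ : δ = c * ρref * Real.exp (c * (m - pref)))
    (hL : L = c * ρref * Real.exp (c * (M - pref)))
    (f g f' g' : X → ℝ)
    (hf : Measurable f) (hg : Measurable g) (hf' : Measurable f') (hg' : Measurable g')
    (hfbd : ∀ᵐ x ∂μ, f x ∈ Set.Icc m M) (hgbd : ∀ᵐ x ∂μ, g x ∈ Set.Icc m M)
    (hf'bd : ∀ᵐ x ∂μ, f' x ∈ Set.Icc m M) (hg'bd : ∀ᵐ x ∂μ, g' x ∈ Set.Icc m M)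
    (hfg : MemLp (f - g) 2 μ) (hf'g' : MemLp (f' - g') 2 μ) :
    (∫ x, φ * (ρ (f x) - ρ (g x)) * (f x - g x) ∂μ) -
        (∫ x, φ * (ρ (f' x) - ρ (g' x)) * (f x - g x) ∂μ) ≥
      φ * δ / 2 * (∫ x, (f x - g x) ^ 2 ∂μ) -
        φ * L ^ 2 / (2 * δ) * ∫ x, (f' x - g' x) ^ 2 ∂μ := by
  have hδpos : 0 < δ := by rw [hδ]; positivity
  have hLpos : 0 < L := by rw [hL]; positivity
  have hsq : Integrable (fun x => (f x - g x) ^ 2) μ := by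
    simpa [Pi.sub_apply] using hfg.integrable_sq
  have hsq' : Integrable (fun x => (f' x - g' x) ^ 2) μ := by
    simpa [Pi.sub_apply] using hf'g'.integrable_sq
  -- integrands
  have hAm : Measurable (fun x => φ * (ρ (f x) - ρ (g x)) * (f x - g x)) := by
    simp only [hρ]
    fun_prop
  have hBm : Measurable (fun x => φ * (ρ (f' x) - ρ (g' x)) * (f x - g x)) := by
    simp only [hρ]
    fun_prop
  have hAint : Integrable (fun x => φ * (ρ (f x) - ρ (g x)) * (f x - g x)) μ := by
    refine Integrable.mono' (hsq.const_mul (φ * L)) hAm.aestronglyMeasurable ?_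
    filter_upwards [hfbd, hgbd] with x hx1 hx2
    obtain ⟨_, h2⟩ := mono_lip ρref c pref m M hρref hc hx1 hx2
    rw [← hL] at h2
    have : ‖φ * (ρ (f x) - ρ (g x)) * (f x - g x)‖
        = φ * |ρ (f x) - ρ (g x)| * |f x - g x| := by
      rw [Real.norm_eq_abs, abs_mul, abs_mul, abs_of_pos hφ]
    rw [this, hρ, hρ]
    calc φ * |ρref * Real.exp (c * (f x - pref)) - ρref * Real.exp (c * (g x - pref))| *
            |f x - g x|
        ≤ φ * (L * |f x - g x|) * |f x - g x| := by
          apply mul_le_mul_of_nonneg_right _ (abs_nonneg _)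
          exact mul_le_mul_of_nonneg_left h2 hφ.le
      _ = φ * L * (f x - g x) ^ 2 := by
          rw [sq, ← abs_mul_abs_self (f x - g x)]; ring
  have hBint : Integrable (fun x => φ * (ρ (f' x) - ρ (g' x)) * (f x - g x)) μ := by
    refine Integrable.mono' ((hsq.add hsq').const_mul (φ * L / 2)) hBm.aestronglyMeasurable ?_
    filter_upwards [hfbd, hgbd, hf'bd, hg'bd] with x hx1 hx2 hx3 hx4
    obtain ⟨_, h2⟩ := mono_lip ρref c pref m M hρref hc hx3 hx4
    rw [← hL] at h2
    have hnorm : ‖φ * (ρ (f' x) - ρ (g' x)) * (f x - g x)‖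
        = φ * |ρ (f' x) - ρ (g' x)| * |f x - g x| := by
      rw [Real.norm_eq_abs, abs_mul, abs_mul, abs_of_pos hφ]
    rw [hnorm, hρ, hρ]
    have step : φ * |ρref * Real.exp (c * (f' x - pref)) - ρref * Real.exp (c * (g' x - pref))| *
            |f x - g x| ≤ φ * (L * |f' x - g' x|) * |f x - g x| :=
      mul_le_mul_of_nonneg_right (mul_le_mul_of_nonneg_left h2 hφ.le) (abs_nonneg _)
    refine step.trans ?_
    have e1 : (f x - g x) ^ 2 = |f x - g x| * |f x - g x| := by
      rw [sq, ← abs_mul_abs_self (f x - g x)]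
    have e2 : (f' x - g' x) ^ 2 = |f' x - g' x| * |f' x - g' x| := by
      rw [sq, ← abs_mul_abs_self (f' x - g' x)]
    simp only [Pi.add_apply]
    rw [e1, e2]
    nlinarith [sq_nonneg (|f x - g x| - |f' x - g' x|), abs_nonneg (f x - g x),
      abs_nonneg (f' x - g' x), mul_pos hφ hLpos]
  -- combine
  rw [ge_iff_le, ← integral_const_mul (φ * δ / 2), ← integral_const_mul (φ * L ^ 2 / (2 * δ)),
    ← integral_sub (hsq.const_mul (φ * δ / 2)) (hsq'.const_mul (φ * L ^ 2 / (2 * δ))),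
    ← integral_sub hAint hBint]
  refine integral_mono_ae
    ((hsq.const_mul (φ * δ / 2)).sub (hsq'.const_mul (φ * L ^ 2 / (2 * δ))))
    (hAint.sub hBint) ?_
  filter_upwards [hfbd, hgbd, hf'bd, hg'bd] with x hx1 hx2 hx3 hx4
  have := ptwise ρref c pref m M φ δ L hρref hc hφ hδ hL hx1 hx2 hx3 hx4
  simp only [hρ]
  convert this using 2 <;> ring
end
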